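/- Let Ψ be a trace-preserving linear map from matrices on one bipartite system to matrices on another, such that both Ψ and the map Ψ^Γ : A ↦ Ψ(A^Γ)^Γ are positive (i.e., send positive semidefinite matrices to positive semidefinite matrices). Then for any state ρ and any real K > 0, F_Γ(Ψ(ρ); K) ≤ F_Γ(ρ; K). -/

import Mathlib

set_option linter.unusedSectionVars false
set_option maxHeartbeats 1000000

open Matrix Filter
open scoped ComplexOrder

noncomputable section

/-- Partial transpose on the second tensor factor:
`ptrans M ((i,j),(k,l)) = M ((i,l),(k,j))`. -/
def ptrans {ι κ : Type*} (M : Matrix (ι × κ) (ι × κ) ℂ) : Matrix (ι × κ) (ι × κ) ℂ :=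
  fun x y => M (x.1, y.2) (y.1, x.2)

/-- Fidelity of `K`-state p.p.t. distillation:
the supremum of `Tr(Fρ)` over Hermitian `F` with `0 ≤ F ≤ 1` and `-1/K ≤ F^Γ ≤ 1/K`. -/
def FGamma {ι κ : Type*} [Fintype ι] [Fintype κ] [DecidableEq ι] [DecidableEq κ]
    (ρ : Matrix (ι × κ) (ι × κ) ℂ) (K : ℝ) : ℝ :=
  sSup {x : ℝ | ∃ F : Matrix (ι × κ) (ι × κ) ℂ,
    F.PosSemidef ∧ (1 - F).PosSemidef ∧
    (((1 / K : ℝ) : ℂ) • 1 - ptrans F).PosSemidef ∧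
    (ptrans F + ((1 / K : ℝ) : ℂ) • 1).PosSemidef ∧
    x = ((F * ρ).trace).re}

section Helpers

variable {n m : Type*} [Fintype n] [DecidableEq n] [Fintype m] [DecidableEq m]

lemma psd_trace_nonneg {M : Matrix n n ℂ} (hM : M.PosSemidef) : 0 ≤ M.trace := by
  rw [Matrix.trace]
  apply Finset.sum_nonneg
  intro i _
  have := hM.dotProduct_mulVec_nonneg (Pi.single i 1)
  simpa [Matrix.mulVec, dotProduct, Pi.single_apply, Matrix.diag] using this

open scoped MatrixOrder in
lemma psd_trace_mul_nonneg {F P : Matrix n n ℂ} (hF : F.PosSemidef) (hP : P.PosSemidef) :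
    0 ≤ (F * P).trace := by
  have hS := (CFC.sqrt_nonneg F).posSemidef
  have h1 : F * P = CFC.sqrt F * (CFC.sqrt F * P) := by rw [← mul_assoc, CFC.sqrt_mul_sqrt_self F hF.nonneg]
  rw [h1, Matrix.trace_mul_comm]
  have h2 : CFC.sqrt F * P * CFC.sqrt F = (CFC.sqrt F)ᴴ * P * CFC.sqrt F := by rw [hS.isHermitian.eq]
  have := (hP.conjTranspose_mul_mul_same (CFC.sqrt F))
  rw [← h2] at this
  exact psd_trace_nonneg this

lemma outer_posSemidef (x : n → ℂ) : (Matrix.vecMulVec x (star x)).PosSemidef := by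
  refine Matrix.PosSemidef.of_dotProduct_mulVec_nonneg ?_ ?_
  · ext i j
    simp [Matrix.vecMulVec, Matrix.conjTranspose_apply, mul_comm]
  · intro y
    have h : star y ⬝ᵥ (Matrix.vecMulVec x (star x)) *ᵥ y
        = (star y ⬝ᵥ x) * star (star y ⬝ᵥ x) := by
      simp only [Matrix.vecMulVec, dotProduct, Matrix.mulVec, Matrix.of_apply,
        star_sum, star_mul', star_star, Pi.star_apply, Finset.mul_sum, Finset.sum_mul]
      rw [Finset.sum_comm]
      apply Finset.sum_congr rfl; intro i _
      apply Finset.sum_congr rfl; intro j _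
      ring
    rw [h]
    exact mul_star_self_nonneg _

lemma trace_mul_outer (M : Matrix n n ℂ) (x : n → ℂ) :
    (M * Matrix.vecMulVec x (star x)).trace = star x ⬝ᵥ M *ᵥ x := by
  simp only [Matrix.trace, Matrix.diag, Matrix.mul_apply, Matrix.vecMulVec, Matrix.of_apply,
    dotProduct, Matrix.mulVec, Pi.star_apply, Finset.mul_sum]
  apply Finset.sum_congr rfl; intro i _
  apply Finset.sum_congr rfl; intro j _
  ring

lemma outer_trace (x : n → ℂ) : (Matrix.vecMulVec x (star x)).trace = star x ⬝ᵥ x := by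
  simp [Matrix.trace, Matrix.vecMulVec, dotProduct, Matrix.diag, mul_comm]

lemma quad_conjTranspose (M : Matrix n n ℂ) (x : n → ℂ) :
    star x ⬝ᵥ Mᴴ *ᵥ x = star (star x ⬝ᵥ M *ᵥ x) := by
  simp only [dotProduct, Matrix.mulVec, Matrix.conjTranspose_apply, star_sum, star_mul',
    star_star, Pi.star_apply, Finset.mul_sum]
  rw [Finset.sum_comm]
  apply Finset.sum_congr rfl; intro i _
  apply Finset.sum_congr rfl; intro j _
  ring

lemma dotProduct_star_self_nonneg' (x : n → ℂ) : 0 ≤ star x ⬝ᵥ x :=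
  Finset.sum_nonneg fun i _ => star_mul_self_nonneg (x i)

lemma smul_one_posSemidef {c : ℝ} (hc : 0 ≤ c) :
    (((c : ℂ)) • (1 : Matrix n n ℂ)).PosSemidef := by
  refine Matrix.PosSemidef.of_dotProduct_mulVec_nonneg ?_ ?_
  · rw [Matrix.IsHermitian, Matrix.conjTranspose_smul, Matrix.conjTranspose_one,
      Complex.star_def, Complex.conj_ofReal]
  · intro x
    have : star x ⬝ᵥ ((c : ℂ) • (1 : Matrix n n ℂ)) *ᵥ x = (c : ℂ) * (star x ⬝ᵥ x) := by
      simp [Matrix.smul_mulVec, Matrix.one_mulVec, dotProduct_smul, smul_eq_mul]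
    rw [this]
    exact mul_nonneg (by exact_mod_cast Complex.zero_le_real.mpr hc)
      (dotProduct_star_self_nonneg' x)

lemma star_eq_self_of_nonneg {z : ℂ} (hz : 0 ≤ z) : star z = z := by
  rw [Complex.star_def, Complex.conj_eq_iff_im]
  exact ((Complex.nonneg_iff.mp hz).2).symm

/-- key adjoint identity -/
lemma adj_key (Ψ : Matrix n n ℂ →ₗ[ℂ] Matrix m m ℂ) (F : Matrix m m ℂ) (N : Matrix n n ℂ) :
    ((Matrix.of fun i j => (F * Ψ (Matrix.single j i 1)).trace) * N).trace
      = (F * Ψ N).trace := by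
  conv_rhs => rw [Matrix.matrix_eq_sum_single N]
  have hsb : ∀ (i : n) (j : n),
      Matrix.single i j (N i j) = N i j • Matrix.single i j 1 := by
    intro i j; rw [Matrix.smul_single, smul_eq_mul, mul_one]
  simp only [hsb, map_sum, _root_.map_smul, Finset.mul_sum, Matrix.mul_smul, Matrix.trace_sum,
    Matrix.trace_smul, smul_eq_mul]
  simp only [Matrix.trace, Matrix.diag, Matrix.mul_apply, Matrix.of_apply]
  rw [Finset.sum_comm]
  apply Finset.sum_congr rfl; intro i _
  apply Finset.sum_congr rfl; intro j _
  ring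

end Helpers

section PtransLemmas

variable {ι κ : Type*} [Fintype ι] [Fintype κ] [DecidableEq ι] [DecidableEq κ]

lemma ptrans_ptrans (M : Matrix (ι × κ) (ι × κ) ℂ) : ptrans (ptrans M) = M := rfl

lemma ptrans_add (A B : Matrix (ι × κ) (ι × κ) ℂ) : ptrans (A + B) = ptrans A + ptrans B := rfl

lemma ptrans_smul (c : ℂ) (A : Matrix (ι × κ) (ι × κ) ℂ) : ptrans (c • A) = c • ptrans A := rfl

lemma ptrans_zero : ptrans (0 : Matrix (ι × κ) (ι × κ) ℂ) = 0 := rfl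

lemma ptrans_conjTranspose (A : Matrix (ι × κ) (ι × κ) ℂ) : ptrans Aᴴ = (ptrans A)ᴴ := rfl

lemma ptrans_one : ptrans (1 : Matrix (ι × κ) (ι × κ) ℂ) = 1 := by
  ext ⟨i, j⟩ ⟨k, l⟩
  simp only [ptrans, Matrix.one_apply, Prod.mk.injEq, Prod.ext_iff]
  by_cases h1 : i = k <;> by_cases h2 : j = l <;> simp [h1, h2, eq_comm]

lemma ptrans_trace (A : Matrix (ι × κ) (ι × κ) ℂ) : (ptrans A).trace = A.trace := rfl

lemma trace_ptrans_mul (A B : Matrix (ι × κ) (ι × κ) ℂ) :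
    (ptrans A * B).trace = (A * ptrans B).trace := by
  simp only [Matrix.trace, Matrix.diag, Matrix.mul_apply, ptrans]
  rw [← Finset.sum_product', ← Finset.sum_product']
  exact Finset.sum_nbij' (fun p => ((p.1.1, p.2.2), (p.2.1, p.1.2)))
    (fun p => ((p.1.1, p.2.2), (p.2.1, p.1.2)))
    (by simp) (by simp) (by simp) (by simp) (by simp)

lemma trace_mul_ptrans (A B : Matrix (ι × κ) (ι × κ) ℂ) :
    (A * ptrans B).trace = (ptrans A * B).trace := (trace_ptrans_mul A B).symm

end PtransLemmas

/-- Monotonicity of `F_Γ` under trace-preserving maps `Ψ` with `Ψ` and `Ψ^Γ` positive. -/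
theorem FGamma_monotone {a b c e : ℕ}
    (Ψ : Matrix (Fin a × Fin b) (Fin a × Fin b) ℂ →ₗ[ℂ]
      Matrix (Fin c × Fin e) (Fin c × Fin e) ℂ)
    (hTP : ∀ M, (Ψ M).trace = M.trace)
    (hpos : ∀ M, M.PosSemidef → (Ψ M).PosSemidef)
    (hposΓ : ∀ M, M.PosSemidef → (ptrans (Ψ (ptrans M))).PosSemidef)
    (ρ : Matrix (Fin a × Fin b) (Fin a × Fin b) ℂ)
    (hρ : ρ.PosSemidef) (hρtr : ρ.trace = 1) (K : ℝ) (hK : 0 < K) :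
    FGamma (Ψ ρ) K ≤ FGamma ρ K := by
  classical
  have hc0 : (0:ℝ) ≤ 1 / K := by positivity
  apply csSup_le_csSup
  · -- bounded above
    refine ⟨1, ?_⟩
    rintro x ⟨F, hF, h1F, -, -, rfl⟩
    have h := psd_trace_mul_nonneg h1F hρ
    rw [Matrix.sub_mul, Matrix.one_mul, Matrix.trace_sub, hρtr] at h
    have := (Complex.nonneg_iff.mp h).1
    simp only [Complex.sub_re, Complex.one_re] at this
    linarith
  · -- nonempty
    refine ⟨0, 0, Matrix.PosSemidef.zero, by simpa using Matrix.PosSemidef.one, ?_, ?_, by simp⟩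
    · rw [ptrans_zero, sub_zero]; exact smul_one_posSemidef hc0
    · rw [ptrans_zero, zero_add]; exact smul_one_posSemidef hc0
  · -- subset
    rintro x ⟨F, hF, h1F, h3, h4, rfl⟩
    set cK : ℂ := ((1 / K : ℝ) : ℂ) with hcK
    set M : Matrix (Fin a × Fin b) (Fin a × Fin b) ℂ :=
      Matrix.of fun i j => (F * Ψ (Matrix.single j i 1)).trace with hMdef
    have key : ∀ N, (M * N).trace = (F * Ψ N).trace := fun N => adj_key Ψ F N
    -- quadratic forms of M
    have qM : ∀ x, star x ⬝ᵥ M *ᵥ x = (F * Ψ (Matrix.vecMulVec x (star x))).trace := by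
      intro x; rw [← trace_mul_outer, key]
    set F' : Matrix (Fin a × Fin b) (Fin a × Fin b) ℂ := (2⁻¹ : ℂ) • (M + Mᴴ) with hF'def
    have hstarhalf : star (2⁻¹ : ℂ) = (2⁻¹ : ℂ) := by
      simp [Complex.star_def, map_inv₀]
    have hF'herm : F'.IsHermitian := by
      rw [Matrix.IsHermitian, hF'def, Matrix.conjTranspose_smul, Matrix.conjTranspose_add,
        Matrix.conjTranspose_conjTranspose, hstarhalf, add_comm Mᴴ M]
    -- t x : the quadratic form of M, nonneg
    have ht0 : ∀ x, 0 ≤ star x ⬝ᵥ M *ᵥ x := by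
      intro x
      rw [qM]
      exact psd_trace_mul_nonneg hF (hpos _ (outer_posSemidef x))
    have qF' : ∀ x, star x ⬝ᵥ F' *ᵥ x = star x ⬝ᵥ M *ᵥ x := by
      intro x
      rw [hF'def]
      rw [Matrix.smul_mulVec, Matrix.add_mulVec, dotProduct_smul, dotProduct_add,
        quad_conjTranspose, star_eq_self_of_nonneg (ht0 x), smul_eq_mul]
      ring
    -- F' is PSD
    have hF'psd : F'.PosSemidef := .of_dotProduct_mulVec_nonneg hF'herm fun x => by rw [qF']; exact ht0 x
    -- 1 - F' is PSD
    have ht1 : ∀ x, star x ⬝ᵥ M *ᵥ x ≤ star x ⬝ᵥ x := by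
      intro x
      have h := psd_trace_mul_nonneg h1F (hpos _ (outer_posSemidef x))
      rw [Matrix.sub_mul, Matrix.one_mul, Matrix.trace_sub, hTP, outer_trace, ← qM] at h
      exact sub_nonneg.mp h
    have h1F'psd : (1 - F').PosSemidef := by
      refine .of_dotProduct_mulVec_nonneg (Matrix.isHermitian_one.sub hF'herm) fun x => ?_
      rw [Matrix.sub_mulVec, dotProduct_sub, Matrix.one_mulVec, qF']
      exact sub_nonneg.mpr (ht1 x)
    -- partial transpose side
    set N' := ptrans F' with hN'def
    have hN'eq : N' = (2⁻¹ : ℂ) • (ptrans M + (ptrans M)ᴴ) := by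
      rw [hN'def, hF'def, ptrans_smul, ptrans_add, ptrans_conjTranspose]
    have hN'herm : N'.IsHermitian := by
      rw [Matrix.IsHermitian, hN'def, ← ptrans_conjTranspose, hF'herm.eq]
    set Q : (Fin a × Fin b → ℂ) → Matrix (Fin c × Fin e) (Fin c × Fin e) ℂ :=
      fun x => ptrans (Ψ (ptrans (Matrix.vecMulVec x (star x)))) with hQdef
    have hQpsd : ∀ x, (Q x).PosSemidef := fun x => hposΓ _ (outer_posSemidef x)
    have hQtr : ∀ x, (Q x).trace = star x ⬝ᵥ x := by
      intro x
      rw [hQdef]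
      simp only
      rw [ptrans_trace, hTP, ptrans_trace, outer_trace]
    have hu : ∀ x, star x ⬝ᵥ (ptrans M) *ᵥ x = (ptrans F * Q x).trace := by
      intro x
      rw [← trace_mul_outer, trace_ptrans_mul, key, hQdef]
      simp only
      rw [trace_ptrans_mul F, ptrans_ptrans]
    have hub : ∀ x, (ptrans F * Q x).trace ≤ cK * (star x ⬝ᵥ x) := by
      intro x
      have h := psd_trace_mul_nonneg h3 (hQpsd x)
      rw [Matrix.sub_mul, Matrix.smul_mul, Matrix.one_mul, Matrix.trace_sub,
        Matrix.trace_smul, smul_eq_mul, hQtr] at h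
      exact sub_nonneg.mp h
    have hlb : ∀ x, 0 ≤ (ptrans F * Q x).trace + cK * (star x ⬝ᵥ x) := by
      intro x
      have h := psd_trace_mul_nonneg h4 (hQpsd x)
      rw [Matrix.add_mul, Matrix.smul_mul, Matrix.one_mul, Matrix.trace_add,
        Matrix.trace_smul, smul_eq_mul, hQtr] at h
      exact h
    -- u real
    have hcν : ∀ x : Fin a × Fin b → ℂ, 0 ≤ cK * (star x ⬝ᵥ x) := by
      intro x
      exact mul_nonneg (Complex.zero_le_real.mpr hc0) (dotProduct_star_self_nonneg' x)
    have hustar : ∀ x, star (star x ⬝ᵥ (ptrans M) *ᵥ x) = star x ⬝ᵥ (ptrans M) *ᵥ x := by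
      intro x
      rw [Complex.star_def, Complex.conj_eq_iff_im, hu x]
      have h1 := (Complex.nonneg_iff.mp (sub_nonneg.mpr (hub x))).2
      have h2 := (Complex.nonneg_iff.mp (hcν x)).2
      rw [Complex.sub_im] at h1
      linarith
    -- quadratic form of N'
    have qN' : ∀ x, star x ⬝ᵥ N' *ᵥ x = star x ⬝ᵥ (ptrans M) *ᵥ x := by
      intro x
      rw [hN'eq, Matrix.smul_mulVec, Matrix.add_mulVec, dotProduct_smul, dotProduct_add,
        quad_conjTranspose, hustar x, smul_eq_mul]
      ring
    have hcond3 : (cK • 1 - N').PosSemidef := by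
      refine .of_dotProduct_mulVec_nonneg ?_ fun x => ?_
      · rw [Matrix.IsHermitian, Matrix.conjTranspose_sub, Matrix.conjTranspose_smul,
          Matrix.conjTranspose_one, hN'herm.eq, hcK, Complex.star_def, Complex.conj_ofReal]
      · rw [Matrix.sub_mulVec, dotProduct_sub, Matrix.smul_mulVec, Matrix.one_mulVec,
          dotProduct_smul, qN', smul_eq_mul, hu x]
        exact sub_nonneg.mpr (hub x)
    have hcond4 : (N' + cK • 1).PosSemidef := by
      refine .of_dotProduct_mulVec_nonneg ?_ fun x => ?_
      · rw [Matrix.IsHermitian, Matrix.conjTranspose_add, Matrix.conjTranspose_smul,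
          Matrix.conjTranspose_one, hN'herm.eq, hcK, Complex.star_def, Complex.conj_ofReal]
      · rw [Matrix.add_mulVec, dotProduct_add, Matrix.smul_mulVec, Matrix.one_mulVec,
          dotProduct_smul, qN', smul_eq_mul, hu x]
        exact hlb x
    -- value
    refine ⟨F', hF'psd, h1F'psd, hcond3, hcond4, ?_⟩
    have hz : (Mᴴ * ρ).trace = star ((M * ρ).trace) := by
      conv_lhs => rw [← hρ.isHermitian.eq]
      rw [← Matrix.conjTranspose_mul, Matrix.trace_conjTranspose, Matrix.trace_mul_comm]
    have : (F' * ρ).trace = (2⁻¹ : ℂ) * ((M * ρ).trace + star ((M * ρ).trace)) := by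
      rw [hF'def, Matrix.smul_mul, Matrix.add_mul, Matrix.trace_smul, Matrix.trace_add,
        hz, smul_eq_mul]
    rw [this, key ρ]
    set z := (F * Ψ ρ).trace
    rw [Complex.star_def, Complex.add_conj]
    simp [Complex.mul_re]
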